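/- Let K₀ be an m×n real matrix such that A − BK₀ is Schur stable, and let sequences (P_i)_{i≥0} and (K_i)_{i≥0} satisfy: P_i is a real symmetric matrix with P_i = Q + K_iᵀRK_i + (A − BK_i)ᵀP_i(A − BK_i), and K_{i+1} = (R + BᵀP_iB)⁻¹BᵀP_iA for all i ≥ 0. If P★ is a symmetric positive definite solution of the ARE, then the sequence P_i converges entrywise to P★ and the sequence K_i converges entrywise to K★ = (R + BᵀP★B)⁻¹BᵀP★A as i → ∞. -/

import Mathlib

open Matrix Filter

set_option maxHeartbeats 1000000

/-- A real square matrix is Schur stable if every eigenvalue of it, viewed as a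
complex matrix, has modulus strictly less than `1`. -/
def SchurStable {n : ℕ} (M : Matrix (Fin n) (Fin n) ℝ) : Prop :=
  ∀ μ ∈ spectrum ℂ (M.map (algebraMap ℝ ℂ)), ‖μ‖ < 1

namespace StmtAux

open scoped ENNReal NNReal

section PowNorm

attribute [local instance] Matrix.linftyOpNormedRing Matrix.linftyOpNormedAlgebra

lemma entry_nnnorm_le {N : ℕ} (X : Matrix (Fin N) (Fin N) ℂ) (i j : Fin N) :
    ‖X i j‖₊ ≤ ‖X‖₊ := by
  rw [Matrix.linfty_opNNNorm_def]
  exact le_trans (Finset.single_le_sum (f := fun k => ‖X i k‖₊)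
    (fun k _ => zero_le) (Finset.mem_univ j))
    (Finset.le_sup (f := fun i => ∑ j, ‖X i j‖₊) (Finset.mem_univ i))

lemma pow_entry_bound {N : ℕ} (M : Matrix (Fin N) (Fin N) ℂ)
    (h : ∀ μ ∈ spectrum ℂ M, ‖μ‖ < 1) :
    ∃ r : ℝ≥0, r < 1 ∧ ∀ᶠ k in atTop, ∀ i j, ‖(M ^ k) i j‖₊ ≤ r ^ k := by
  have hCS : CompleteSpace (Matrix (Fin N) (Fin N) ℂ) :=
    (by infer_instance)
  set s := (Matrix.finite_spectrum M).toFinset with hs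
  set r₀ : ℝ≥0 := s.sup fun μ => ‖μ‖₊ with hr₀
  have hr₀lt : r₀ < 1 := by
    rcases s.eq_empty_or_nonempty with he | hne
    · rw [hr₀, he]; simpa using zero_lt_one
    · rw [hr₀, Finset.sup_lt_iff (by simpa using zero_lt_one)]
      intro μ hμ
      have hμ' : μ ∈ spectrum ℂ M := by simpa [hs] using hμ
      have := h μ hμ'
      simpa [← NNReal.coe_lt_coe] using this
  have hρ : spectralRadius ℂ M ≤ (r₀ : ℝ≥0∞) := by
    rw [spectralRadius]
    refine iSup₂_le fun μ hμ => ?_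
    have : ‖μ‖₊ ≤ r₀ := Finset.le_sup (by simpa [hs] using hμ)
    exact_mod_cast this
  set r : ℝ≥0 := (r₀ + 1) / 2 with hr
  have hr₀r : r₀ < r := by
    rw [hr]
    rw [lt_div_iff₀ (by norm_num)]
    calc r₀ * 2 = r₀ + r₀ := by ring
    _ < r₀ + 1 := by exact add_lt_add_right hr₀lt r₀
  have hrlt : r < 1 := by
    rw [hr, div_lt_iff₀ (by norm_num)]
    calc r₀ + 1 < 1 + 1 := add_lt_add_left hr₀lt 1
    _ = 1 * 2 := by ring
  refine ⟨r, hrlt, ?_⟩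
  have hgel := spectrum.pow_nnnorm_pow_one_div_tendsto_nhds_spectralRadius M
  have hev : ∀ᶠ k : ℕ in atTop, (‖M ^ k‖₊ : ℝ≥0∞) ^ (1 / (k : ℝ)) < (r : ℝ≥0∞) := by
    refine hgel.eventually_lt_const ?_
    exact lt_of_le_of_lt hρ (by exact_mod_cast hr₀r)
  filter_upwards [hev, eventually_ge_atTop 1] with k hk hk1 i j
  have hk0 : (k : ℝ) ≠ 0 := by positivity
  have hx : (‖M ^ k‖₊ : ℝ≥0∞) ≤ (r : ℝ≥0∞) ^ (k : ℝ) := by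
    have h1 : ((‖M ^ k‖₊ : ℝ≥0∞) ^ (1 / (k : ℝ))) ^ (k : ℝ) ≤ (r : ℝ≥0∞) ^ (k : ℝ) :=
      ENNReal.rpow_le_rpow hk.le (by positivity)
    rwa [← ENNReal.rpow_mul, one_div, inv_mul_cancel₀ hk0, ENNReal.rpow_one] at h1
  have hx' : ‖M ^ k‖₊ ≤ r ^ k := by
    rw [ENNReal.rpow_natCast] at hx
    exact_mod_cast hx
  exact le_trans (entry_nnnorm_le _ _ _) hx'





end PowNorm

lemma map_pow_comm {N : ℕ} (M : Matrix (Fin N) (Fin N) ℝ) (k : ℕ) :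
    (M.map (algebraMap ℝ ℂ)) ^ k = (M ^ k).map (algebraMap ℝ ℂ) := by
  simpa [RingHom.mapMatrix_apply] using (map_pow ((algebraMap ℝ ℂ).mapMatrix) M k).symm

lemma tendsto_pow_of_schurStable {N : ℕ} {M : Matrix (Fin N) (Fin N) ℝ} (h : SchurStable M) :
    Tendsto (fun k => M ^ k) atTop (nhds 0) := by
  obtain ⟨r, hr1, hev⟩ := pow_entry_bound (M.map (algebraMap ℝ ℂ)) h
  refine tendsto_pi_nhds.mpr fun i => tendsto_pi_nhds.mpr fun j => ?_
  have h0 : (0 : Matrix (Fin N) (Fin N) ℝ) i j = 0 := rfl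
  rw [h0]
  have habs : ∀ᶠ k : ℕ in atTop, ‖(M ^ k) i j‖ ≤ (r : ℝ) ^ k := by
    filter_upwards [hev] with k hk
    have h2 := hk i j
    rw [map_pow_comm] at h2
    have h3 : ‖((M ^ k).map (algebraMap ℝ ℂ)) i j‖₊ = ‖(M ^ k) i j‖₊ := by
      simp [Matrix.map_apply]
    rw [h3] at h2
    calc ‖(M ^ k) i j‖ = ((‖(M ^ k) i j‖₊ : ℝ)) := rfl
    _ ≤ ((r ^ k : NNReal) : ℝ) := by exact_mod_cast h2
    _ = (r : ℝ) ^ k := by push_cast; ring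
  exact squeeze_zero_norm' habs
    (tendsto_pow_atTop_nhds_zero_of_lt_one r.coe_nonneg (by exact_mod_cast hr1))

lemma isHermitian_of_isSymm {N : ℕ} {Δ : Matrix (Fin N) (Fin N) ℝ} (h : Δ.IsSymm) :
    Δ.IsHermitian := by
  ext i j
  simp only [Matrix.conjTranspose_apply, star_trivial]
  exact congrFun (congrFun h i) j

lemma dot_sandwich {p q : ℕ} (X : Matrix (Fin p) (Fin q) ℝ) (C : Matrix (Fin p) (Fin p) ℝ)
    (x : Fin q → ℝ) : x ⬝ᵥ (Xᵀ * C * X) *ᵥ x = (X *ᵥ x) ⬝ᵥ C *ᵥ (X *ᵥ x) := by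
  rw [← Matrix.mulVec_mulVec, ← Matrix.mulVec_mulVec, Matrix.dotProduct_mulVec x,
    Matrix.vecMul_transpose]

lemma psd_quad {N : ℕ} {C : Matrix (Fin N) (Fin N) ℝ} (h : C.PosSemidef) (x : Fin N → ℝ) :
    0 ≤ x ⬝ᵥ C *ᵥ x := by simpa using h.dotProduct_mulVec_nonneg x

lemma pd_quad {N : ℕ} {C : Matrix (Fin N) (Fin N) ℝ} (h : C.PosDef) {x : Fin N → ℝ}
    (hx : x ≠ 0) : 0 < x ⬝ᵥ C *ᵥ x := by simpa using h.dotProduct_mulVec_pos hx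

lemma quad_sum {N : ℕ} (x : Fin N → ℝ) (s : Finset ℕ) (C : ℕ → Matrix (Fin N) (Fin N) ℝ) :
    x ⬝ᵥ (∑ j ∈ s, C j) *ᵥ x = ∑ j ∈ s, x ⬝ᵥ (C j) *ᵥ x := by
  classical
  induction s using Finset.induction with
  | empty => simp
  | @insert _ _ h ih =>
    rw [Finset.sum_insert h, Finset.sum_insert h, Matrix.add_mulVec, dotProduct_add, ih]

lemma lyap_unroll {N : ℕ} (M Δ S : Matrix (Fin N) (Fin N) ℝ) (hΔ : Δ = S + Mᵀ * Δ * M) (k : ℕ) :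
    Δ = (M ^ k)ᵀ * Δ * M ^ k + ∑ j ∈ Finset.range k, (M ^ j)ᵀ * S * M ^ j := by
  induction k with
  | zero => simp
  | succ k ih =>
    conv_lhs => rw [ih]
    conv_lhs => rw [hΔ]
    rw [Finset.sum_range_succ, pow_succ' M k]
    simp only [Matrix.transpose_mul, Matrix.mul_add, Matrix.add_mul, Matrix.mul_assoc]
    abel

lemma posSemidef_of_lyap {N : ℕ} {M Δ S : Matrix (Fin N) (Fin N) ℝ} (hM : SchurStable M)
    (hΔs : Δ.IsSymm) (hS : S.PosSemidef) (hΔ : Δ = S + Mᵀ * Δ * M) : Δ.PosSemidef := by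
  refine Matrix.PosSemidef.of_dotProduct_mulVec_nonneg (isHermitian_of_isSymm hΔs) fun x => ?_
  simp only [star_trivial]
  set f : Matrix (Fin N) (Fin N) ℝ → ℝ := fun N0 => x ⬝ᵥ (N0ᵀ * Δ * N0) *ᵥ x with hf
  have key : ∀ k : ℕ, f (M ^ k) ≤ x ⬝ᵥ Δ *ᵥ x := by
    intro k
    conv_rhs => rw [lyap_unroll M Δ S hΔ k]
    rw [Matrix.add_mulVec, dotProduct_add]
    have hsum : 0 ≤ x ⬝ᵥ (∑ j ∈ Finset.range k, (M ^ j)ᵀ * S * M ^ j) *ᵥ x := by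
      rw [quad_sum]
      refine Finset.sum_nonneg fun j _ => ?_
      rw [dot_sandwich]
      exact psd_quad hS _
    linarith
  have hcont : Continuous f := by
    exact (continuous_const (y := x)).dotProduct
      ((((continuous_id.matrix_transpose).matrix_mul continuous_const).matrix_mul
        continuous_id).matrix_mulVec continuous_const)
  have hf0 : f 0 = 0 := by simp [hf]
  have hlim : Tendsto (fun k => f (M ^ k)) atTop (nhds 0) := by
    rw [← hf0]
    exact (hcont.tendsto 0).comp (tendsto_pow_of_schurStable hM)
  exact le_of_tendsto hlim (Eventually.of_forall key)





lemma conjT_eq_T {p q : ℕ} (X : Matrix (Fin p) (Fin q) ℝ) : Xᴴ = Xᵀ := by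
  ext i j; simp [Matrix.conjTranspose_apply]

lemma isSymm_of_isHermitian {N : ℕ} {C : Matrix (Fin N) (Fin N) ℝ} (h : C.IsHermitian) :
    C.IsSymm := by
  rw [Matrix.IsSymm, ← conjT_eq_T]; exact h

lemma dot_symm {N : ℕ} {C : Matrix (Fin N) (Fin N) ℝ} (hC : C.IsSymm) (u w : Fin N → ℝ) :
    u ⬝ᵥ C *ᵥ w = w ⬝ᵥ C *ᵥ u := by
  conv_lhs => rw [Matrix.dotProduct_mulVec, ← hC, Matrix.vecMul_transpose,
    dotProduct_comm]

lemma psd_mulVec_zero {N : ℕ} {C : Matrix (Fin N) (Fin N) ℝ} (h : C.PosSemidef)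
    {x : Fin N → ℝ} (hx : x ⬝ᵥ C *ᵥ x = 0) : C *ᵥ x = 0 := by
  exact (h.dotProduct_mulVec_zero_iff x).mp (by simpa using hx)

lemma re_mulVec {p q : ℕ} (M : Matrix (Fin p) (Fin q) ℝ) (v : Fin q → ℂ) (i : Fin p) :
    (((M.map (algebraMap ℝ ℂ)) *ᵥ v) i).re = (M *ᵥ fun j => (v j).re) i := by
  simp [Matrix.mulVec, dotProduct, Complex.re_sum, Matrix.map_apply, Complex.mul_re]

lemma im_mulVec {p q : ℕ} (M : Matrix (Fin p) (Fin q) ℝ) (v : Fin q → ℂ) (i : Fin p) :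
    (((M.map (algebraMap ℝ ℂ)) *ᵥ v) i).im = (M *ᵥ fun j => (v j).im) i := by
  simp [Matrix.mulVec, dotProduct, Complex.im_sum, Matrix.map_apply, Complex.mul_im]

lemma stable_of_lyap {n m : ℕ} (A : Matrix (Fin n) (Fin n) ℝ) (B : Matrix (Fin n) (Fin m) ℝ)
    (Q : Matrix (Fin n) (Fin n) ℝ) (R : Matrix (Fin m) (Fin m) ℝ)
    (hQ : Q.PosSemidef) (hR : R.PosDef)
    (hObs : ∀ x : Fin n → ℝ, (∀ k : ℕ, Q.mulVec ((A ^ k).mulVec x) = 0) → x = 0)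
    (K : Matrix (Fin m) (Fin n) ℝ) (P E : Matrix (Fin n) (Fin n) ℝ)
    (hPpsd : P.PosSemidef) (hE : E.PosSemidef)
    (hLyap : P = Q + Kᵀ * R * K + E + (A - B * K)ᵀ * P * (A - B * K)) :
    SchurStable (A - B * K) := by
  intro μ hμ
  by_contra hge
  push_neg at hge
  set M := A - B * K with hM
  -- obtain an eigenvector
  have hspec : spectrum ℂ (Matrix.toLin' (M.map (algebraMap ℝ ℂ)))
      = spectrum ℂ (M.map (algebraMap ℝ ℂ)) :=
    AlgEquiv.spectrum_eq Matrix.toLinAlgEquiv' (M.map (algebraMap ℝ ℂ))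
  have hev : Module.End.HasEigenvalue (Matrix.toLin' (M.map (algebraMap ℝ ℂ))) μ := by
    rw [Module.End.hasEigenvalue_iff_mem_spectrum, hspec]
    exact hμ
  obtain ⟨v, hv⟩ := hev.exists_hasEigenvector
  have hvec : (M.map (algebraMap ℝ ℂ)) *ᵥ v = μ • v := by
    have := hv.apply_eq_smul
    rwa [Matrix.toLin'_apply] at this
  set x : Fin n → ℝ := fun j => (v j).re with hx
  set y : Fin n → ℝ := fun j => (v j).im with hy
  set a : ℝ := μ.re with ha
  set b : ℝ := μ.im with hb
  have hre : M *ᵥ x = a • x - b • y := by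
    funext i
    have h1 := congrArg Complex.re (congrFun hvec i)
    rw [re_mulVec M v i, ← hx] at h1
    rw [h1]
    simp [Complex.mul_re, hx, hy, ha, hb, smul_eq_mul]
  have him : M *ᵥ y = b • x + a • y := by
    funext i
    have h1 := congrArg Complex.im (congrFun hvec i)
    rw [im_mulVec M v i, ← hy] at h1
    rw [h1]
    simp only [Pi.smul_apply, smul_eq_mul, Complex.mul_im, Pi.add_apply]
    simp [hx, hy, ha, hb]
    ring
  have hPs : P.IsSymm := isSymm_of_isHermitian hPpsd.1
  have hxy := dot_symm hPs x y
  have key : (M *ᵥ x) ⬝ᵥ P *ᵥ (M *ᵥ x) + (M *ᵥ y) ⬝ᵥ P *ᵥ (M *ᵥ y)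
      = (a ^ 2 + b ^ 2) * (x ⬝ᵥ P *ᵥ x + y ⬝ᵥ P *ᵥ y) := by
    rw [hre, him]
    simp only [Matrix.mulVec_add, Matrix.mulVec_sub, Matrix.mulVec_smul,
      dotProduct_add, dotProduct_sub, dotProduct_smul,
      add_dotProduct, sub_dotProduct, smul_dotProduct, smul_eq_mul]
    rw [dot_symm hPs y x]
    ring
  -- quadratic identity from the Lyapunov equation
  have hx1 : x ⬝ᵥ P *ᵥ x = x ⬝ᵥ Q *ᵥ x + x ⬝ᵥ (Kᵀ * R * K) *ᵥ x + x ⬝ᵥ E *ᵥ x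
      + (M *ᵥ x) ⬝ᵥ P *ᵥ (M *ᵥ x) := by
    conv_lhs => rw [hLyap]
    simp only [Matrix.add_mulVec, dotProduct_add, dot_sandwich]
  have hy1 : y ⬝ᵥ P *ᵥ y = y ⬝ᵥ Q *ᵥ y + y ⬝ᵥ (Kᵀ * R * K) *ᵥ y + y ⬝ᵥ E *ᵥ y
      + (M *ᵥ y) ⬝ᵥ P *ᵥ (M *ᵥ y) := by
    conv_lhs => rw [hLyap]
    simp only [Matrix.add_mulVec, dotProduct_add, dot_sandwich]
  have hsplit : x ⬝ᵥ P *ᵥ x + y ⬝ᵥ P *ᵥ y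
      = (x ⬝ᵥ Q *ᵥ x + y ⬝ᵥ Q *ᵥ y) + (x ⬝ᵥ (Kᵀ * R * K) *ᵥ x + y ⬝ᵥ (Kᵀ * R * K) *ᵥ y)
        + (x ⬝ᵥ E *ᵥ x + y ⬝ᵥ E *ᵥ y)
        + (a ^ 2 + b ^ 2) * (x ⬝ᵥ P *ᵥ x + y ⬝ᵥ P *ᵥ y) := by
    linarith [hx1, hy1, key]
  have hqP : 0 ≤ x ⬝ᵥ P *ᵥ x + y ⬝ᵥ P *ᵥ y := add_nonneg (psd_quad hPpsd x) (psd_quad hPpsd y)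
  have hKRK : (Kᵀ * R * K).PosSemidef := by
    have := hR.posSemidef.conjTranspose_mul_mul_same K
    rwa [conjT_eq_T] at this
  have hs1 : 1 ≤ a ^ 2 + b ^ 2 := by
    have h2 : 1 * 1 ≤ ‖μ‖ * ‖μ‖ := mul_le_mul hge hge zero_le_one (norm_nonneg μ)
    have h3 : ‖μ‖ * ‖μ‖ = a ^ 2 + b ^ 2 := by
      calc ‖μ‖ * ‖μ‖ = ‖μ‖ ^ 2 := by ring
      _ = μ.re * μ.re + μ.im * μ.im := by
        rw [Complex.sq_norm, Complex.normSq_apply]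
      _ = a ^ 2 + b ^ 2 := by rw [ha, hb]; ring
    linarith
  have hfac := mul_le_mul_of_nonneg_right hs1 hqP
  have n1 := add_nonneg (psd_quad hQ x) (psd_quad hQ y)
  have n2 := add_nonneg (psd_quad hKRK x) (psd_quad hKRK y)
  have n3 := add_nonneg (psd_quad hE x) (psd_quad hE y)
  have hzQ : x ⬝ᵥ Q *ᵥ x + y ⬝ᵥ Q *ᵥ y = 0 := by linarith
  have hzK : x ⬝ᵥ (Kᵀ * R * K) *ᵥ x + y ⬝ᵥ (Kᵀ * R * K) *ᵥ y = 0 := by linarith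
  have hQx : Q *ᵥ x = 0 :=
    psd_mulVec_zero hQ (by linarith [psd_quad hQ x, psd_quad hQ y])
  have hQy : Q *ᵥ y = 0 :=
    psd_mulVec_zero hQ (by linarith [psd_quad hQ x, psd_quad hQ y])
  have hKx : K *ᵥ x = 0 := by
    have h0 : x ⬝ᵥ (Kᵀ * R * K) *ᵥ x = 0 := by
      linarith [psd_quad hKRK x, psd_quad hKRK y]
    rw [dot_sandwich] at h0
    by_contra hne
    exact absurd h0 (ne_of_gt (pd_quad hR hne))
  have hKy : K *ᵥ y = 0 := by
    have h0 : y ⬝ᵥ (Kᵀ * R * K) *ᵥ y = 0 := by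
      linarith [psd_quad hKRK x, psd_quad hKRK y]
    rw [dot_sandwich] at h0
    by_contra hne
    exact absurd h0 (ne_of_gt (pd_quad hR hne))
  have hAx : A *ᵥ x = a • x - b • y := by
    rw [← hre, hM, Matrix.sub_mulVec, ← Matrix.mulVec_mulVec, hKx, Matrix.mulVec_zero, sub_zero]
  have hAy : A *ᵥ y = b • x + a • y := by
    rw [← him, hM, Matrix.sub_mulVec, ← Matrix.mulVec_mulVec, hKy, Matrix.mulVec_zero, sub_zero]
  have hinv : ∀ k : ℕ, ∃ c d : ℝ,
      (A ^ k) *ᵥ x = c • x + d • y ∧ (A ^ k) *ᵥ y = (-d) • x + c • y := by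
    intro k
    induction k with
    | zero => refine ⟨1, 0, ?_, ?_⟩ <;> simp [Matrix.one_mulVec]
    | succ k ih =>
      obtain ⟨c, d, h1, h2⟩ := ih
      refine ⟨c * a + d * b, d * a - c * b, ?_, ?_⟩
      · rw [pow_succ' A k, ← Matrix.mulVec_mulVec, h1, Matrix.mulVec_add,
          Matrix.mulVec_smul, Matrix.mulVec_smul, hAx, hAy]
        funext i
        simp only [Pi.add_apply, Pi.sub_apply, Pi.smul_apply, smul_eq_mul]
        ring
      · rw [pow_succ' A k, ← Matrix.mulVec_mulVec, h2, Matrix.mulVec_add,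
          Matrix.mulVec_smul, Matrix.mulVec_smul, hAx, hAy]
        funext i
        simp only [Pi.add_apply, Pi.sub_apply, Pi.smul_apply, smul_eq_mul]
        ring
  have hx0 : x = 0 := by
    refine hObs x fun k => ?_
    obtain ⟨c, d, h1, _⟩ := hinv k
    rw [h1, Matrix.mulVec_add, Matrix.mulVec_smul, Matrix.mulVec_smul, hQx, hQy]
    simp
  have hy0 : y = 0 := by
    refine hObs y fun k => ?_
    obtain ⟨c, d, _, h2⟩ := hinv k
    rw [h2, Matrix.mulVec_add, Matrix.mulVec_smul, Matrix.mulVec_smul, hQx, hQy]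
    simp
  have hv0 : v = 0 := by
    funext j
    have h1 : (v j).re = 0 := by
      have := congrFun hx0 j
      simpa [hx] using this
    have h2 : (v j).im = 0 := by
      have := congrFun hy0 j
      simpa [hy] using this
    exact Complex.ext h1 h2
  exact hv.2 hv0


variable {n m : ℕ}



lemma expand_quad (A : Matrix (Fin n) (Fin n) ℝ) (B : Matrix (Fin n) (Fin m) ℝ)
    (Q P : Matrix (Fin n) (Fin n) ℝ) (R : Matrix (Fin m) (Fin m) ℝ)
    (J : Matrix (Fin m) (Fin n) ℝ) :
    Q + Jᵀ * R * J + (A - B * J)ᵀ * P * (A - B * J)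
      = Q + Aᵀ * P * A + Jᵀ * (R + Bᵀ * P * B) * J - Jᵀ * (Bᵀ * P * A) - Aᵀ * P * B * J := by
  simp only [Matrix.transpose_sub, Matrix.transpose_mul, Matrix.sub_mul, Matrix.mul_sub,
    Matrix.add_mul, Matrix.mul_add, Matrix.mul_assoc]
  abel

lemma completion (A : Matrix (Fin n) (Fin n) ℝ) (B : Matrix (Fin n) (Fin m) ℝ)
    (Q P : Matrix (Fin n) (Fin n) ℝ) (R : Matrix (Fin m) (Fin m) ℝ)
    (hPs : P.IsSymm) (hRs : R.IsSymm)
    (hdet : IsUnit (R + Bᵀ * P * B).det)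
    (K Kp : Matrix (Fin m) (Fin n) ℝ)
    (hKp : Kp = (R + Bᵀ * P * B)⁻¹ * (Bᵀ * P * A)) :
    Q + Kᵀ * R * K + (A - B * K)ᵀ * P * (A - B * K)
      = Q + Kpᵀ * R * Kp + (A - B * Kp)ᵀ * P * (A - B * Kp)
        + (K - Kp)ᵀ * (R + Bᵀ * P * B) * (K - Kp) := by
  have hGs : (R + Bᵀ * P * B)ᵀ = R + Bᵀ * P * B := by
    simp only [Matrix.transpose_add, Matrix.transpose_mul, Matrix.transpose_transpose, hPs.eq,
      hRs.eq, Matrix.mul_assoc]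
  have hGK : (R + Bᵀ * P * B) * Kp = Bᵀ * P * A := by
    rw [hKp, ← Matrix.mul_assoc, Matrix.mul_nonsing_inv _ hdet, Matrix.one_mul]
  have hKG : Kpᵀ * (R + Bᵀ * P * B) = Aᵀ * P * B := by
    have h1 := congrArg Matrix.transpose hGK
    rw [Matrix.transpose_mul, hGs] at h1
    rw [h1]
    simp only [Matrix.transpose_mul, Matrix.transpose_transpose, hPs.eq, Matrix.mul_assoc]
  rw [expand_quad, expand_quad]
  have hexp : (K - Kp)ᵀ * (R + Bᵀ * P * B) * (K - Kp)
      = Kᵀ * (R + Bᵀ * P * B) * K - Kᵀ * ((R + Bᵀ * P * B) * Kp)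
        - Kpᵀ * (R + Bᵀ * P * B) * K + Kpᵀ * (R + Bᵀ * P * B) * Kp := by
    simp only [Matrix.transpose_sub, Matrix.sub_mul, Matrix.mul_sub, Matrix.mul_assoc]
    abel
  have h3 : Kpᵀ * ((R + Bᵀ * P * B) * Kp) = Aᵀ * P * B * Kp := by
    rw [← Matrix.mul_assoc, hKG]
  have h4 : Kpᵀ * (Bᵀ * P * A) = Aᵀ * P * B * Kp := by rw [← hGK, h3]
  have h5 : Kpᵀ * (R + Bᵀ * P * B) * Kp = Aᵀ * P * B * Kp := by
    rw [Matrix.mul_assoc, h3]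
  rw [hexp, hGK, hKG, h4]
  abel

lemma are_fixed_point (A : Matrix (Fin n) (Fin n) ℝ) (B : Matrix (Fin n) (Fin m) ℝ)
    (Q : Matrix (Fin n) (Fin n) ℝ) (R : Matrix (Fin m) (Fin m) ℝ)
    (Pstar : Matrix (Fin n) (Fin n) ℝ) (hPs : Pstar.IsSymm) (hRs : R.IsSymm)
    (hdet : IsUnit (R + Bᵀ * Pstar * B).det)
    (hARE : Aᵀ * Pstar * A - Pstar
        - Aᵀ * Pstar * B * (R + Bᵀ * Pstar * B)⁻¹ * (Bᵀ * Pstar * A) + Q = 0)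
    (Kstar : Matrix (Fin m) (Fin n) ℝ)
    (hKstar : Kstar = (R + Bᵀ * Pstar * B)⁻¹ * (Bᵀ * Pstar * A)) :
    Pstar = Q + Kstarᵀ * R * Kstar + (A - B * Kstar)ᵀ * Pstar * (A - B * Kstar) := by
  have hGK : (R + Bᵀ * Pstar * B) * Kstar = Bᵀ * Pstar * A := by
    rw [hKstar, ← Matrix.mul_assoc, Matrix.mul_nonsing_inv _ hdet, Matrix.one_mul]
  have hGs : (R + Bᵀ * Pstar * B)ᵀ = R + Bᵀ * Pstar * B := by
    simp only [Matrix.transpose_add, Matrix.transpose_mul, Matrix.transpose_transpose, hPs.eq,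
      hRs.eq, Matrix.mul_assoc]
  have hKG : Kstarᵀ * (R + Bᵀ * Pstar * B) = Aᵀ * Pstar * B := by
    have h1 := congrArg Matrix.transpose hGK
    rw [Matrix.transpose_mul, hGs] at h1
    rw [h1]
    simp only [Matrix.transpose_mul, Matrix.transpose_transpose, hPs.eq, Matrix.mul_assoc]
  have h3 : Kstarᵀ * ((R + Bᵀ * Pstar * B) * Kstar) = Aᵀ * Pstar * B * Kstar := by
    rw [← Matrix.mul_assoc, hKG]
  have h4 : Kstarᵀ * (Bᵀ * Pstar * A) = Aᵀ * Pstar * B * Kstar := by rw [← hGK, h3]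
  have h5 : Kstarᵀ * (R + Bᵀ * Pstar * B) * Kstar = Aᵀ * Pstar * B * Kstar := by
    rw [Matrix.mul_assoc, h3]
  have hT : Aᵀ * Pstar * B * (R + Bᵀ * Pstar * B)⁻¹ * (Bᵀ * Pstar * A)
      = Aᵀ * Pstar * B * Kstar := by
    rw [hKstar, Matrix.mul_assoc]
  have hP : Pstar = Q + Aᵀ * Pstar * A - Aᵀ * Pstar * B * Kstar := by
    rw [← sub_eq_zero]
    rw [show Pstar - (Q + Aᵀ * Pstar * A - Aᵀ * Pstar * B * Kstar)
      = -(Aᵀ * Pstar * A - Pstar - Aᵀ * Pstar * B * Kstar + Q) from by abel]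
    rw [← hT, hARE, neg_zero]
  rw [expand_quad, h4, h5]
  conv_lhs => rw [hP]
  abel


lemma KRK_psd {n m : ℕ} {R : Matrix (Fin m) (Fin m) ℝ} (hR : R.PosSemidef)
    (K : Matrix (Fin m) (Fin n) ℝ) : (Kᵀ * R * K).PosSemidef := by
  have := hR.conjTranspose_mul_mul_same K
  rwa [conjT_eq_T] at this

lemma det_unit {N : ℕ} {G : Matrix (Fin N) (Fin N) ℝ} (h : G.PosDef) : IsUnit G.det :=
  isUnit_iff_ne_zero.mpr h.det_pos.ne'

lemma sub_lyap {α : Type*} [AddCommGroup α] (X Y S C1 C2 E : α)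
    (hX : X = S + C1 + E) (hY : Y = S + C2) : X - Y = E + (C1 - C2) := by
  rw [hX, hY]; abel

lemma sub_lyap2 {α : Type*} [AddCommGroup α] (X Y S C1 C2 E : α)
    (hX : X = S + C1) (hY : S + C2 = Y + E) : X - Y = E + (C1 - C2) := by
  have hS : S = Y + E - C2 := by rw [← hY]; abel
  rw [hX, hS]; abel

lemma sandwich_sub {N : ℕ} (M X Y : Matrix (Fin N) (Fin N) ℝ) :
    Mᵀ * X * M - Mᵀ * Y * M = Mᵀ * (X - Y) * M := by
  simp only [Matrix.mul_sub, Matrix.sub_mul]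

lemma quad_sub {N : ℕ} (X Y : Matrix (Fin N) (Fin N) ℝ) (x : Fin N → ℝ) :
    x ⬝ᵥ (X - Y) *ᵥ x = x ⬝ᵥ X *ᵥ x - x ⬝ᵥ Y *ᵥ x := by
  rw [Matrix.sub_mulVec, dotProduct_sub]

lemma tendsto_mat_mul {p q r : ℕ} {f : ℕ → Matrix (Fin p) (Fin q) ℝ}
    {g : ℕ → Matrix (Fin q) (Fin r) ℝ} {F : Matrix (Fin p) (Fin q) ℝ}
    {G : Matrix (Fin q) (Fin r) ℝ} (hf : Tendsto f atTop (nhds F))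
    (hg : Tendsto g atTop (nhds G)) : Tendsto (fun i => f i * g i) atTop (nhds (F * G)) := by
  have hc : Continuous fun z : Matrix (Fin p) (Fin q) ℝ × Matrix (Fin q) (Fin r) ℝ =>
      z.1 * z.2 := continuous_fst.matrix_mul continuous_snd
  exact (hc.tendsto (F, G)).comp (hf.prodMk_nhds hg)

lemma tendsto_quad {N : ℕ} {f : ℕ → Matrix (Fin N) (Fin N) ℝ} {F : Matrix (Fin N) (Fin N) ℝ}
    (hf : Tendsto f atTop (nhds F)) (x : Fin N → ℝ) :
    Tendsto (fun i => x ⬝ᵥ (f i) *ᵥ x) atTop (nhds (x ⬝ᵥ F *ᵥ x)) := by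
  have hc : Continuous fun Mt : Matrix (Fin N) (Fin N) ℝ => x ⬝ᵥ Mt *ᵥ x :=
    continuous_const.dotProduct (continuous_id.matrix_mulVec continuous_const)
  exact (hc.tendsto F).comp hf

lemma polar_entry {N : ℕ} (Mt : Matrix (Fin N) (Fin N) ℝ) (hs : Mt.IsSymm) (k l : Fin N) :
    Mt k l = ((Pi.single k 1 + Pi.single l 1) ⬝ᵥ Mt *ᵥ (Pi.single k 1 + Pi.single l 1)
      - Pi.single k 1 ⬝ᵥ Mt *ᵥ Pi.single k 1 - Pi.single l 1 ⬝ᵥ Mt *ᵥ Pi.single l 1) / 2 := by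
  have hkl : Mt l k = Mt k l := congrFun (congrFun hs k) l
  simp only [add_dotProduct, Matrix.mulVec_add, dotProduct_add,
    single_dotProduct, Matrix.mulVec_single, Pi.add_apply, one_mul, mul_one,
    MulOpposite.op_one, one_smul, Matrix.col_apply]
  linarith [hkl]

end StmtAux

open StmtAux in
theorem stmt_2 {n m : ℕ}
    (A : Matrix (Fin n) (Fin n) ℝ) (B : Matrix (Fin n) (Fin m) ℝ)
    (Q : Matrix (Fin n) (Fin n) ℝ) (R : Matrix (Fin m) (Fin m) ℝ)
    (hQ : Q.PosSemidef) (hR : R.PosDef)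
    (hObs : ∀ x : Fin n → ℝ, (∀ k : ℕ, Q.mulVec ((A ^ k).mulVec x) = 0) → x = 0)
    (K : ℕ → Matrix (Fin m) (Fin n) ℝ) (P : ℕ → Matrix (Fin n) (Fin n) ℝ)
    (hK0 : SchurStable (A - B * K 0))
    (hPsymm : ∀ i, (P i).IsSymm)
    (hP : ∀ i, P i = Q + (K i)ᵀ * R * (K i) + (A - B * K i)ᵀ * (P i) * (A - B * K i))
    (hKupd : ∀ i, K (i + 1) = (R + Bᵀ * (P i) * B)⁻¹ * (Bᵀ * (P i) * A))
    (Pstar : Matrix (Fin n) (Fin n) ℝ) (hPstar : Pstar.PosDef)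
    (hARE : Aᵀ * Pstar * A - Pstar
        - Aᵀ * Pstar * B * (R + Bᵀ * Pstar * B)⁻¹ * (Bᵀ * Pstar * A) + Q = 0)
    (Kstar : Matrix (Fin m) (Fin n) ℝ)
    (hKstar : Kstar = (R + Bᵀ * Pstar * B)⁻¹ * (Bᵀ * Pstar * A)) :
    (∀ k l, Tendsto (fun i => P i k l) atTop (nhds (Pstar k l))) ∧
      (∀ k l, Tendsto (fun i => K i k l) atTop (nhds (Kstar k l))) := by
  classical
  have hRs : R.IsSymm := isSymm_of_isHermitian hR.1
  have hPstarSymm : Pstar.IsSymm := isSymm_of_isHermitian hPstar.1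
  have hPstarPsd : Pstar.PosSemidef := hPstar.posSemidef
  have hBPB : ∀ {X : Matrix (Fin n) (Fin n) ℝ}, X.PosSemidef → (Bᵀ * X * B).PosSemidef := by
    intro X hX
    have := hX.conjTranspose_mul_mul_same B
    rwa [conjT_eq_T] at this
  have hGstarPD : (R + Bᵀ * Pstar * B).PosDef := hR.add_posSemidef (hBPB hPstarPsd)
  have hdetstar : IsUnit (R + Bᵀ * Pstar * B).det := det_unit hGstarPD
  have hfix : Pstar = Q + Kstarᵀ * R * Kstar + (A - B * Kstar)ᵀ * Pstar * (A - B * Kstar) :=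
    are_fixed_point A B Q R Pstar hPstarSymm hRs hdetstar hARE Kstar hKstar
  have hMstar : SchurStable (A - B * Kstar) :=
    stable_of_lyap A B Q R hQ hR hObs Kstar Pstar 0 hPstarPsd Matrix.PosSemidef.zero
      (by rw [add_zero]; exact hfix)
  -- induction: stability and positive semidefiniteness along the iteration
  have main : ∀ i, SchurStable (A - B * K i) ∧ (P i).PosSemidef := by
    intro i
    induction i with
    | zero =>
      exact ⟨hK0, posSemidef_of_lyap hK0 (hPsymm 0)
        (hQ.add (KRK_psd hR.posSemidef (K 0))) (hP 0)⟩
    | succ i ih =>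
      obtain ⟨hst, hpsd⟩ := ih
      have hGiPD : (R + Bᵀ * P i * B).PosDef := hR.add_posSemidef (hBPB hpsd)
      have hdeti : IsUnit (R + Bᵀ * P i * B).det := det_unit hGiPD
      have hPi' := (hP i).trans
        (completion A B Q (P i) R (hPsymm i) hRs hdeti (K i) (K (i + 1)) (hKupd i))
      have hE : ((K i - K (i + 1))ᵀ * (R + Bᵀ * P i * B) * (K i - K (i + 1))).PosSemidef :=
        KRK_psd hGiPD.posSemidef _
      have hst' : SchurStable (A - B * K (i + 1)) :=
        stable_of_lyap A B Q R hQ hR hObs (K (i + 1)) (P i) _ hpsd hE (hPi'.trans (by abel))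
      exact ⟨hst', posSemidef_of_lyap hst' (hPsymm (i + 1))
        (hQ.add (KRK_psd hR.posSemidef (K (i + 1)))) (hP (i + 1))⟩
  have hstab : ∀ i, SchurStable (A - B * K i) := fun i => (main i).1
  have hpsd : ∀ i, (P i).PosSemidef := fun i => (main i).2
  have hGiPD : ∀ i, (R + Bᵀ * P i * B).PosDef := fun i => hR.add_posSemidef (hBPB (hpsd i))
  have hdeti : ∀ i, IsUnit (R + Bᵀ * P i * B).det := fun i => det_unit (hGiPD i)
  -- lower bound : P i ≥ Pstar
  have hlow : ∀ i, (P i - Pstar).PosSemidef := by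
    intro i
    have hcomp := completion A B Q Pstar R hPstarSymm hRs hdetstar (K i) Kstar hKstar
    have h2 : Q + (K i)ᵀ * R * (K i) + (A - B * K i)ᵀ * Pstar * (A - B * K i)
        = Pstar + (K i - Kstar)ᵀ * (R + Bᵀ * Pstar * B) * (K i - Kstar) := by
      rw [hcomp, ← hfix]
    have h3 := sub_lyap2 (P i) Pstar (Q + (K i)ᵀ * R * (K i))
      ((A - B * K i)ᵀ * (P i) * (A - B * K i)) ((A - B * K i)ᵀ * Pstar * (A - B * K i))
      ((K i - Kstar)ᵀ * (R + Bᵀ * Pstar * B) * (K i - Kstar)) (hP i) h2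
    rw [sandwich_sub] at h3
    exact posSemidef_of_lyap (hstab i) ((hPsymm i).sub hPstarSymm)
      (KRK_psd hGstarPD.posSemidef _) h3
  -- monotone decrease
  have hmono : ∀ i, (P i - P (i + 1)).PosSemidef := by
    intro i
    have hPi' := (hP i).trans
      (completion A B Q (P i) R (hPsymm i) hRs (hdeti i) (K i) (K (i + 1)) (hKupd i))
    have h3 := sub_lyap (P i) (P (i + 1)) (Q + (K (i + 1))ᵀ * R * (K (i + 1)))
      ((A - B * K (i + 1))ᵀ * (P i) * (A - B * K (i + 1)))
      ((A - B * K (i + 1))ᵀ * (P (i + 1)) * (A - B * K (i + 1)))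
      ((K i - K (i + 1))ᵀ * (R + Bᵀ * P i * B) * (K i - K (i + 1))) hPi' (hP (i + 1))
    rw [sandwich_sub] at h3
    exact posSemidef_of_lyap (hstab (i + 1)) ((hPsymm i).sub (hPsymm (i + 1)))
      (KRK_psd (hGiPD i).posSemidef _) h3
  -- convergence of quadratic forms
  have hanti : ∀ x : Fin n → ℝ, Antitone fun i => x ⬝ᵥ (P i) *ᵥ x := by
    intro x
    refine antitone_nat_of_succ_le fun i => ?_
    have := psd_quad (hmono i) x
    rw [quad_sub] at this
    linarith
  have hbdd : ∀ x : Fin n → ℝ, BddBelow (Set.range fun i => x ⬝ᵥ (P i) *ᵥ x) := by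
    intro x
    refine ⟨x ⬝ᵥ Pstar *ᵥ x, ?_⟩
    rintro s ⟨i, rfl⟩
    have := psd_quad (hlow i) x
    rw [quad_sub] at this
    simpa using by linarith
  have hLt : ∀ x : Fin n → ℝ,
      Tendsto (fun i => x ⬝ᵥ (P i) *ᵥ x) atTop (nhds (⨅ i, x ⬝ᵥ (P i) *ᵥ x)) :=
    fun x => tendsto_atTop_ciInf (hanti x) (hbdd x)
  set L : (Fin n → ℝ) → ℝ := fun x => ⨅ i, x ⬝ᵥ (P i) *ᵥ x with hL
  set Pinf : Matrix (Fin n) (Fin n) ℝ := Matrix.of fun k l =>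
    (L (Pi.single k 1 + Pi.single l 1) - L (Pi.single k 1) - L (Pi.single l 1)) / 2
    with hPinfdef
  have hPtend : ∀ k l, Tendsto (fun i => P i k l) atTop (nhds (Pinf k l)) := by
    intro k l
    have ht := (((hLt (Pi.single k 1 + Pi.single l 1)).sub (hLt (Pi.single k 1))).sub
      (hLt (Pi.single l 1))).div_const 2
    have hval : Pinf k l = (L (Pi.single k 1 + Pi.single l 1) - L (Pi.single k 1)
        - L (Pi.single l 1)) / 2 := rfl
    rw [hval]
    exact ht.congr fun i => (polar_entry (P i) (hPsymm i) k l).symm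
  have hPmat : Tendsto (fun i => P i) atTop (nhds Pinf) :=
    tendsto_pi_nhds.mpr fun k => tendsto_pi_nhds.mpr fun l => hPtend k l
  have hPinfSymm : Pinf.IsSymm := by
    ext k l
    show Pinf l k = Pinf k l
    simp only [hPinfdef, Matrix.of_apply]
    rw [add_comm (Pi.single l 1)]
    ring
  have hPinfPsd : Pinf.PosSemidef := by
    refine Matrix.PosSemidef.of_dotProduct_mulVec_nonneg (isHermitian_of_isSymm hPinfSymm) fun x => ?_
    simp only [star_trivial]
    exact ge_of_tendsto (tendsto_quad hPmat x) (Eventually.of_forall fun i => psd_quad (hpsd i) x)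
  have dir1 : (Pinf - Pstar).PosSemidef := by
    refine Matrix.PosSemidef.of_dotProduct_mulVec_nonneg (isHermitian_of_isSymm (hPinfSymm.sub hPstarSymm)) fun x => ?_
    simp only [star_trivial]
    rw [quad_sub, sub_nonneg]
    refine ge_of_tendsto (tendsto_quad hPmat x) (Eventually.of_forall fun i => ?_)
    have := psd_quad (hlow i) x
    rw [quad_sub] at this
    linarith
  -- limit gain
  have hGinfPD : (R + Bᵀ * Pinf * B).PosDef := hR.add_posSemidef (hBPB hPinfPsd)
  have hdetinf : IsUnit (R + Bᵀ * Pinf * B).det := det_unit hGinfPD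
  set Kinf : Matrix (Fin m) (Fin n) ℝ := (R + Bᵀ * Pinf * B)⁻¹ * (Bᵀ * Pinf * A) with hKinfdef
  have hGtend : Tendsto (fun i => R + Bᵀ * P i * B) atTop (nhds (R + Bᵀ * Pinf * B)) :=
    tendsto_const_nhds.add (tendsto_mat_mul (tendsto_mat_mul tendsto_const_nhds hPmat)
      tendsto_const_nhds)
  have hInvCont : ContinuousAt Inv.inv (R + Bᵀ * Pinf * B) := by
    refine continuousAt_matrix_inv _ ?_
    rw [Ring.inverse_eq_inv']
    exact continuousAt_inv₀ (by simpa using hGinfPD.det_pos.ne')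
  have hGinv : Tendsto (fun i => (R + Bᵀ * P i * B)⁻¹) atTop (nhds (R + Bᵀ * Pinf * B)⁻¹) :=
    hInvCont.tendsto.comp hGtend
  have hBPA : Tendsto (fun i => Bᵀ * P i * A) atTop (nhds (Bᵀ * Pinf * A)) :=
    tendsto_mat_mul (tendsto_mat_mul tendsto_const_nhds hPmat) tendsto_const_nhds
  have hKshift : Tendsto (fun i => K (i + 1)) atTop (nhds Kinf) :=
    (tendsto_mat_mul hGinv hBPA).congr fun i => (hKupd i).symm
  have hKlim : Tendsto (fun i => K i) atTop (nhds Kinf) :=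
    (tendsto_add_atTop_iff_nat 1).mp hKshift
  -- the limit satisfies the fixed point equation
  have hKTlim : Tendsto (fun i => (K i)ᵀ) atTop (nhds Kinfᵀ) :=
    ((continuous_id.matrix_transpose).tendsto Kinf).comp hKlim
  have hMlim : Tendsto (fun i => A - B * K i) atTop (nhds (A - B * Kinf)) :=
    tendsto_const_nhds.sub (tendsto_mat_mul tendsto_const_nhds hKlim)
  have hMTlim : Tendsto (fun i => (A - B * K i)ᵀ) atTop (nhds (A - B * Kinf)ᵀ) :=
    ((continuous_id.matrix_transpose).tendsto _).comp hMlim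
  have hRHS : Tendsto (fun i => Q + (K i)ᵀ * R * (K i)
      + (A - B * K i)ᵀ * (P i) * (A - B * K i)) atTop
      (nhds (Q + Kinfᵀ * R * Kinf + (A - B * Kinf)ᵀ * Pinf * (A - B * Kinf))) :=
    (tendsto_const_nhds.add (tendsto_mat_mul (tendsto_mat_mul hKTlim tendsto_const_nhds)
      hKlim)).add (tendsto_mat_mul (tendsto_mat_mul hMTlim hPmat) hMlim)
  have hPfix : Pinf = Q + Kinfᵀ * R * Kinf + (A - B * Kinf)ᵀ * Pinf * (A - B * Kinf) :=
    tendsto_nhds_unique hPmat (hRHS.congr fun i => (hP i).symm)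
  -- Pstar ≥ Pinf
  have hcompInf := completion A B Q Pinf R hPinfSymm hRs hdetinf Kstar Kinf hKinfdef
  have h2' : Q + Kstarᵀ * R * Kstar + (A - B * Kstar)ᵀ * Pinf * (A - B * Kstar)
      = Pinf + (Kstar - Kinf)ᵀ * (R + Bᵀ * Pinf * B) * (Kstar - Kinf) := by
    rw [hcompInf, ← hPfix]
  have h3 := sub_lyap2 Pstar Pinf (Q + Kstarᵀ * R * Kstar)
    ((A - B * Kstar)ᵀ * Pstar * (A - B * Kstar)) ((A - B * Kstar)ᵀ * Pinf * (A - B * Kstar))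
    ((Kstar - Kinf)ᵀ * (R + Bᵀ * Pinf * B) * (Kstar - Kinf)) hfix h2'
  rw [sandwich_sub] at h3
  have dir2 : (Pstar - Pinf).PosSemidef :=
    posSemidef_of_lyap hMstar (hPstarSymm.sub hPinfSymm) (KRK_psd hGinfPD.posSemidef _) h3
  -- hence Pinf = Pstar
  have hq0 : ∀ x, x ⬝ᵥ (Pinf - Pstar) *ᵥ x = 0 := by
    intro x
    have h1 := psd_quad dir1 x
    have h2 := psd_quad dir2 x
    rw [quad_sub] at h1 h2 ⊢
    linarith
  have hzero : ∀ x, (Pinf - Pstar) *ᵥ x = 0 := fun x => psd_mulVec_zero dir1 (hq0 x)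
  have hPeq : Pinf = Pstar := by
    ext k l
    have h0 : (Pinf - Pstar) k l * 1 = 0 := by
      have h1 := hzero (Pi.single l 1)
      rw [Matrix.mulVec_single] at h1
      exact congrFun h1 k
    have h2 : Pinf k l - Pstar k l = 0 := by simpa [Matrix.sub_apply] using h0
    linarith
  have hKeq : Kinf = Kstar := by rw [hKinfdef, hPeq, ← hKstar]
  constructor
  · intro k l
    have := hPtend k l
    rwa [show Pinf k l = Pstar k l from by rw [hPeq]] at this
  · intro k l
    have h1 := tendsto_pi_nhds.mp (tendsto_pi_nhds.mp hKlim k) l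
    rwa [show Kinf k l = Kstar k l from by rw [hKeq]] at h1
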